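/- Let T be an essentially small monoidal triangulated category with noetherian spectrum and let (X, σ) be a classifying support datum on T. Then the universal map f_σ : X → Spc(T) defined by f_σ(x) = {t ∈ T : x ∉ σ(t)} is a homeomorphism. -/

import Mathlib

open CategoryTheory CategoryTheory.Limits CategoryTheory.Pretriangulated
  CategoryTheory.MonoidalCategory TopologicalSpace ZeroObject

universe v u

variable (C : Type u) [Category.{v} C] [HasZeroObject C] [Preadditive C]
  [HasShift C ℤ] [∀ n : ℤ, (shiftFunctor C n).Additive] [Pretriangulated C]
  [HasBinaryBiproducts C] [MonoidalCategory C] [EssentiallySmall.{v} C]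
  [∀ X : C, (tensorLeft X).CommShift ℤ] [∀ X : C, (tensorRight X).CommShift ℤ]
  [∀ X : C, (tensorLeft X).IsTriangulated] [∀ X : C, (tensorRight X).IsTriangulated]

/-- A thick two-sided tensor ideal of a monoidal triangulated category:
a thick (triangulated, closed under direct summands) subcategory, closed under
left and right tensoring by arbitrary objects. -/
structure ThickIdeal : Type (max u v) where
  carrier : Set C
  zero_mem : (0 : C) ∈ carrier
  iso_closed : ∀ {a b : C}, (a ≅ b) → a ∈ carrier → b ∈ carrier
  shift_mem : ∀ (a : C) (n : ℤ), a ∈ carrier → (a⟦n⟧ : C) ∈ carrier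
  ext₂ : ∀ T : Triangle C, (T ∈ distTriang C) →
    T.obj₁ ∈ carrier → T.obj₃ ∈ carrier → T.obj₂ ∈ carrier
  summand_mem : ∀ a b : C, (a ⊞ b) ∈ carrier → a ∈ carrier
  tensor_left_mem : ∀ a x : C, a ∈ carrier → (x ⊗ a) ∈ carrier
  tensor_right_mem : ∀ a x : C, a ∈ carrier → (a ⊗ x) ∈ carrier

namespace ThickIdeal

variable {C}

/-- A thick two-sided ideal is proper if it is not all of `C`. -/
def IsProper (P : ThickIdeal C) : Prop := P.carrier ≠ Set.univ

/-- A prime ideal: a proper thick two-sided ideal `P` such that `I ⊗ J ⊆ P`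
implies `I ⊆ P` or `J ⊆ P` for all thick two-sided ideals `I`, `J`.
(Since `P` is a thick two-sided ideal, `I ⊗ J ⊆ P` is equivalent to all
elementwise tensor products lying in `P`.) -/
def IsPrime (P : ThickIdeal C) : Prop :=
  P.IsProper ∧ ∀ I J : ThickIdeal C,
    (∀ i ∈ I.carrier, ∀ j ∈ J.carrier, (i ⊗ j) ∈ P.carrier) →
      I.carrier ⊆ P.carrier ∨ J.carrier ⊆ P.carrier

/-- A semiprime ideal: an intersection of prime ideals. -/
def IsSemiprime (J : ThickIdeal C) : Prop :=
  ∃ S : Set (ThickIdeal C), (∀ P ∈ S, P.IsPrime) ∧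
    J.carrier = ⋂ P ∈ S, P.carrier

end ThickIdeal

/-- The noncommutative Balmer spectrum: the set of prime thick two-sided ideals. -/
def Spc : Type (max u v) := {P : ThickIdeal C // P.IsPrime}

/-- The topology on `Spc C` generated by declaring the sets
`V(S) = {P : P ∩ S = ∅}` to be closed, i.e. their complements
`U(S) = {P : P ∩ S ≠ ∅}` to be open. -/
instance : TopologicalSpace (Spc C) :=
  generateFrom
    {U : Set (Spc C) | ∃ S : Set C, U = {P : Spc C | (P.1.carrier ∩ S).Nonempty}}

/-- The small noncommutative support of an object. -/
def supp (t : C) : Set (Spc C) := {P : Spc C | t ∉ P.1.carrier}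

/-- The support of a collection of objects. -/
def suppSet (E : Set C) : Set (Spc C) := ⋃ t ∈ E, supp C t

/-- A Thomason subset: a union of closed subsets with quasi-compact complements. -/
def IsThomason (Y : Set (Spc C)) : Prop :=
  ∃ 𝒴 : Set (Set (Spc C)), Y = ⋃₀ 𝒴 ∧ ∀ Z ∈ 𝒴, IsClosed Z ∧ IsCompact Zᶜ

/-- A support datum on `C` with values in the topological space `X`. -/
structure SupportDatum (X : Type*) [TopologicalSpace X] where
  σ : C → Set X
  isClosed_σ : ∀ t : C, IsClosed (σ t)
  σ_zero : σ 0 = ∅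
  σ_unit : σ (𝟙_ C) = Set.univ
  σ_sum : ∀ a b : C, σ (a ⊞ b) = σ a ∪ σ b
  σ_shift : ∀ a : C, σ (a⟦(1 : ℤ)⟧) = σ a
  σ_triangle : ∀ T : Triangle C, (T ∈ distTriang C) →
    σ T.obj₁ ⊆ σ T.obj₂ ∪ σ T.obj₃
  σ_tensor : ∀ a b : C, (⋃ c : C, σ (a ⊗ c ⊗ b)) = σ a ∩ σ b

/-- A specialisation closed subset: a union of closed subsets. -/
def IsSpecClosed {X : Type*} [TopologicalSpace X] (Y : Set X) : Prop :=
  ∃ 𝒴 : Set (Set X), Y = ⋃₀ 𝒴 ∧ ∀ Z ∈ 𝒴, IsClosed Z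

/-- A classifying support datum: the space `X` is noetherian and spectral, and
`Θ(Y) = {t : σ(t) ⊆ Y}` is a bijection from specialisation closed subsets of `X`
to thick two-sided semiprime ideals of `C`, with inverse `J ↦ ⋃_{j ∈ J} σ(j)`. -/
structure ClassifyingSupportDatum (X : Type*) [TopologicalSpace X]
    extends SupportDatum C X where
  noetherian : NoetherianSpace X
  compact : CompactSpace X
  t0 : T0Space X
  basis : IsTopologicalBasis {U : Set X | IsOpen U ∧ IsCompact U}
  qc_inter : ∀ U V : Set X, IsOpen U → IsCompact U → IsOpen V → IsCompact V →
    IsCompact (U ∩ V)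
  sober : QuasiSober X
  theta_semiprime : ∀ Y : Set X, IsSpecClosed Y →
    ∃ J : ThickIdeal C, J.IsSemiprime ∧ J.carrier = {t : C | σ t ⊆ Y}
  theta_leftInv : ∀ Y : Set X, IsSpecClosed Y →
    (⋃ t ∈ {t : C | σ t ⊆ Y}, σ t) = Y
  sigma_specClosed : ∀ J : ThickIdeal C, J.IsSemiprime →
    IsSpecClosed (⋃ j ∈ J.carrier, σ j)
  theta_rightInv : ∀ J : ThickIdeal C, J.IsSemiprime →
    {t : C | σ t ⊆ ⋃ j ∈ J.carrier, σ j} = J.carrier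

/-- The alternating tensor product `r 0 ⊗ c 0 ⊗ r 1 ⊗ c 1 ⊗ ⋯ ⊗ c (n-1) ⊗ r n`. -/
def altTensor : ∀ (n : ℕ), (Fin (n + 1) → C) → (Fin n → C) → C
  | 0, r, _ => r 0
  | n + 1, r, c =>
      altTensor n (fun i => r i.castSucc) (fun i => c i.castSucc) ⊗
        (c (Fin.last n) ⊗ r (Fin.last (n + 1)))

section Aux

variable {C}

lemma ThickIdeal.carrier_injective {P Q : ThickIdeal C} (h : P.carrier = Q.carrier) :
    P = Q := by
  cases P; cases Q; cases h; rfl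

/-- Pull back a thick ideal along a family of triangulated endofunctors. -/
def ThickIdeal.pull (P : ThickIdeal C) {K : Type*} (G : K → C ⥤ C)
    [∀ k, (G k).CommShift ℤ] [∀ k, (G k).IsTriangulated]
    (hL : ∀ a x : C, (∀ k, (G k).obj a ∈ P.carrier) → ∀ k, (G k).obj (x ⊗ a) ∈ P.carrier)
    (hR : ∀ a x : C, (∀ k, (G k).obj a ∈ P.carrier) → ∀ k, (G k).obj (a ⊗ x) ∈ P.carrier) :
    ThickIdeal C where
  carrier := {a : C | ∀ k, (G k).obj a ∈ P.carrier}
  zero_mem := fun k => P.iso_closed ((G k).mapZeroObject).symm P.zero_mem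
  iso_closed := fun e h k => P.iso_closed ((G k).mapIso e) (h k)
  shift_mem := fun a n h k =>
    P.iso_closed ((((G k).commShiftIso n).app a).symm) (P.shift_mem _ n (h k))
  ext₂ := fun T hT h1 h3 k =>
    P.ext₂ ((G k).mapTriangle.obj T) ((G k).map_distinguished T hT) (h1 k) (h3 k)
  summand_mem := fun a b h k => by
    haveI := Limits.preservesBinaryBiproducts_of_preservesBinaryProducts (G k)
    exact P.summand_mem _ _ (P.iso_closed ((G k).mapBiprod a b) (h k))
  tensor_left_mem := fun a x h => hL a x h
  tensor_right_mem := fun a x h => hR a x h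

lemma ThickIdeal.prime_pair {P : ThickIdeal C} (hP : P.IsPrime) {a b : C}
    (h : ∀ c : C, (a ⊗ c ⊗ b) ∈ P.carrier) : a ∈ P.carrier ∨ b ∈ P.carrier := by
  have hIL : ∀ u x : C, (∀ c : C, (tensorRight (c ⊗ b)).obj u ∈ P.carrier) →
      ∀ c : C, (tensorRight (c ⊗ b)).obj (x ⊗ u) ∈ P.carrier := by
    intro u x hu c
    show (x ⊗ u) ⊗ (c ⊗ b) ∈ P.carrier
    exact P.iso_closed (α_ x u (c ⊗ b)).symm (P.tensor_left_mem _ x (hu c))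
  have hIR : ∀ u x : C, (∀ c : C, (tensorRight (c ⊗ b)).obj u ∈ P.carrier) →
      ∀ c : C, (tensorRight (c ⊗ b)).obj (u ⊗ x) ∈ P.carrier := by
    intro u x hu c
    show (u ⊗ x) ⊗ (c ⊗ b) ∈ P.carrier
    have h1 : u ⊗ ((x ⊗ c) ⊗ b) ∈ P.carrier := hu (x ⊗ c)
    exact P.iso_closed (whiskerLeftIso u (α_ x c b) ≪≫ (α_ u x (c ⊗ b)).symm) h1
  set I := P.pull (fun c : C => tensorRight (c ⊗ b)) hIL hIR with hIdef
  have haI : a ∈ I.carrier := fun c => h c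
  have hJL : ∀ u x : C, (∀ i : I.carrier, (tensorLeft i.1).obj u ∈ P.carrier) →
      ∀ i : I.carrier, (tensorLeft i.1).obj (x ⊗ u) ∈ P.carrier := by
    intro u x hu i
    show i.1 ⊗ (x ⊗ u) ∈ P.carrier
    have hmem : (i.1 ⊗ x) ∈ I.carrier := I.tensor_right_mem i.1 x i.2
    exact P.iso_closed (α_ i.1 x u) (hu ⟨i.1 ⊗ x, hmem⟩)
  have hJR : ∀ u x : C, (∀ i : I.carrier, (tensorLeft i.1).obj u ∈ P.carrier) →
      ∀ i : I.carrier, (tensorLeft i.1).obj (u ⊗ x) ∈ P.carrier := by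
    intro u x hu i
    show i.1 ⊗ (u ⊗ x) ∈ P.carrier
    have h1 : (i.1 ⊗ u) ⊗ x ∈ P.carrier := P.tensor_right_mem _ x (hu i)
    exact P.iso_closed (α_ i.1 u x) h1
  set J := P.pull (fun i : I.carrier => tensorLeft i.1) hJL hJR with hJdef
  have hbJ : b ∈ J.carrier := by
    intro i
    show i.1 ⊗ b ∈ P.carrier
    have h1 : i.1 ⊗ ((𝟙_ C) ⊗ b) ∈ P.carrier := i.2 (𝟙_ C)
    exact P.iso_closed (whiskerLeftIso i.1 (λ_ b)) h1
  rcases hP.2 I J (fun i hi j hj => hj ⟨i, hi⟩) with hIP | hJP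
  · exact Or.inl (hIP haI)
  · exact Or.inr (hJP hbJ)

lemma ThickIdeal.altTensor_prime {P : ThickIdeal C} (hP : P.IsPrime) :
    ∀ (n : ℕ) (r : Fin (n + 1) → C),
      (∀ c : Fin n → C, altTensor C n r c ∈ P.carrier) → ∃ i, r i ∈ P.carrier := by
  intro n
  induction n with
  | zero =>
      intro r h
      exact ⟨0, h (fun i => i.elim0)⟩
  | succ n ih =>
      intro r h
      by_cases hl : r (Fin.last (n + 1)) ∈ P.carrier
      · exact ⟨_, hl⟩
      · have hmain : ∀ c' : Fin n → C,
            altTensor C n (fun i => r i.castSucc) c' ∈ P.carrier := by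
          intro c'
          have hpair := ThickIdeal.prime_pair hP
            (a := altTensor C n (fun i => r i.castSucc) c') (b := r (Fin.last (n + 1)))
            (fun d => by
              have := h (Fin.snoc c' d)
              simpa only [altTensor, Fin.snoc_castSucc, Fin.snoc_last] using this)
          rcases hpair with h' | h'
          · exact h'
          · exact absurd h' hl
        obtain ⟨i, hi⟩ := ih _ hmain
        exact ⟨i.castSucc, hi⟩

section Datum

variable {X : Type*} [TopologicalSpace X]

lemma SupportDatum.sigma_altTensor (D : SupportDatum C X) :
    ∀ (n : ℕ) (r : Fin (n + 1) → C),
      (⋃ c : Fin n → C, D.σ (altTensor C n r c)) = ⋂ i, D.σ (r i) := by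
  intro n
  induction n with
  | zero =>
      intro r
      ext x
      simp only [Set.mem_iUnion, Set.mem_iInter, altTensor]
      constructor
      · rintro ⟨c, hc⟩ i
        rw [Fin.fin_one_eq_zero i]
        exact hc
      · intro hx
        exact ⟨fun i => i.elim0, hx 0⟩
  | succ n ih =>
      intro r
      have step : (⋃ c : Fin (n + 1) → C, D.σ (altTensor C (n + 1) r c))
          = ⋃ c' : Fin n → C, ⋃ d : C,
              D.σ (altTensor C n (fun i => r i.castSucc) c' ⊗ d ⊗ r (Fin.last (n + 1))) := by
        ext x
        simp only [Set.mem_iUnion]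
        constructor
        · rintro ⟨c, hc⟩
          refine ⟨fun i => c i.castSucc, c (Fin.last n), ?_⟩
          simpa only [altTensor] using hc
        · rintro ⟨c', d, hc⟩
          refine ⟨Fin.snoc c' d, ?_⟩
          simpa only [altTensor, Fin.snoc_castSucc, Fin.snoc_last] using hc
      have step2 : (⋃ c' : Fin n → C, ⋃ d : C,
            D.σ (altTensor C n (fun i => r i.castSucc) c' ⊗ d ⊗ r (Fin.last (n + 1))))
          = (⋂ i : Fin (n + 1), D.σ (r i.castSucc)) ∩ D.σ (r (Fin.last (n + 1))) := by
        calc (⋃ c' : Fin n → C, ⋃ d : C,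
              D.σ (altTensor C n (fun i => r i.castSucc) c' ⊗ d ⊗ r (Fin.last (n + 1))))
            = ⋃ c' : Fin n → C,
              (D.σ (altTensor C n (fun i => r i.castSucc) c') ∩ D.σ (r (Fin.last (n + 1)))) := by
              refine Set.iUnion_congr fun c' => ?_
              exact D.σ_tensor _ _
          _ = (⋃ c' : Fin n → C, D.σ (altTensor C n (fun i => r i.castSucc) c'))
              ∩ D.σ (r (Fin.last (n + 1))) := by rw [Set.iUnion_inter]
          _ = (⋂ i : Fin (n + 1), D.σ (r i.castSucc)) ∩ D.σ (r (Fin.last (n + 1))) := by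
              rw [ih]
      rw [step, step2]
      ext x
      simp only [Set.mem_inter_iff, Set.mem_iInter]
      constructor
      · rintro ⟨h1, h2⟩ i
        refine Fin.lastCases ?_ ?_ i
        · exact h2
        · exact h1
      · intro hx
        exact ⟨fun i => hx i.castSucc, hx (Fin.last (n + 1))⟩

lemma ClassifyingSupportDatum.exists_sigma_closure (D : ClassifyingSupportDatum C X) (x : X) :
    ∃ t : C, x ∈ D.σ t ∧ D.σ t ⊆ closure {x} := by
  have hspec : IsSpecClosed (closure ({x} : Set X)) :=
    ⟨{closure {x}}, by simp, by simp⟩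
  have hx : x ∈ (⋃ t ∈ {t : C | D.σ t ⊆ closure ({x} : Set X)}, D.σ t) := by
    rw [D.theta_leftInv _ hspec]
    exact subset_closure rfl
  obtain ⟨t, ht, hxt⟩ := Set.mem_iUnion₂.mp hx
  exact ⟨t, hxt, ht⟩

/-- The main point-existence lemma for surjectivity. -/
lemma ClassifyingSupportDatum.exists_point (D : ClassifyingSupportDatum C X)
    (P : ThickIdeal C) (hP : P.IsPrime) :
    ∃ x : X, (∀ t, t ∉ P.carrier → x ∈ D.σ t) ∧ ∀ t ∈ P.carrier, x ∉ D.σ t := by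
  haveI := D.noetherian
  have hsemi : P.IsSemiprime := ⟨{P}, by simpa using hP, by simp⟩
  have hPY : {t : C | D.σ t ⊆ ⋃ j ∈ P.carrier, D.σ j} = P.carrier := D.theta_rightInv P hsemi
  obtain ⟨t₀, ht₀⟩ := (Set.ne_univ_iff_exists_notMem _).mp hP.1
  set 𝒮 : Set (Closeds X) := {Z | ∃ (n : ℕ) (r : Fin (n + 1) → C),
    (∀ i, r i ∉ P.carrier) ∧ (Z : Set X) = ⋂ i, D.σ (r i)} with h𝒮def
  have h𝒮 : 𝒮.Nonempty := by
    refine ⟨⟨⋂ i : Fin 1, D.σ ((fun _ => t₀) i), isClosed_iInter fun i => D.isClosed_σ _⟩,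
      0, fun _ => t₀, fun _ => ht₀, rfl⟩
  obtain ⟨M, hM𝒮, hMmin⟩ := (wellFounded_lt (α := Closeds X)).has_min 𝒮 h𝒮
  obtain ⟨n, r, hr, hMeq⟩ := hM𝒮
  have snoc_inter : ∀ t : C,
      (⋂ i : Fin (n + 2), D.σ ((Fin.snoc r t : Fin (n + 2) → C) i)) = (⋂ i, D.σ (r i)) ∩ D.σ t := by
    intro t
    ext x
    simp only [Set.mem_iInter, Set.mem_inter_iff]
    constructor
    · intro hx
      refine ⟨fun i => ?_, ?_⟩
      · simpa only [Fin.snoc_castSucc] using hx i.castSucc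
      · simpa only [Fin.snoc_last] using hx (Fin.last _)
    · rintro ⟨h1, h2⟩ i
      refine Fin.lastCases ?_ ?_ i
      · simpa only [Fin.snoc_last] using h2
      · intro j; simpa only [Fin.snoc_castSucc] using h1 j
  have hMsub : ∀ t, t ∉ P.carrier → (M : Set X) ⊆ D.σ t := by
    intro t ht
    by_contra hsub
    have hmem : (M ⊓ ⟨D.σ t, D.isClosed_σ t⟩ : Closeds X) ∈ 𝒮 := by
      refine ⟨n + 1, Fin.snoc r t, ?_, ?_⟩
      · intro i
        refine Fin.lastCases ?_ ?_ i
        · simpa only [Fin.snoc_last] using ht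
        · intro j; simpa only [Fin.snoc_castSucc] using hr j
      · show ((M : Set X) ∩ D.σ t) = _
        rw [snoc_inter, hMeq]
    have hlt : (M ⊓ ⟨D.σ t, D.isClosed_σ t⟩ : Closeds X) < M := by
      refine lt_of_le_of_ne inf_le_left fun hEq => hsub fun y hy => ?_
      have h2 : y ∈ M := hy
      rw [← hEq] at h2
      have h3 : y ∈ ((M ⊓ ⟨D.σ t, D.isClosed_σ t⟩ : Closeds X) : Set X) := h2
      rw [TopologicalSpace.Closeds.coe_inf] at h3
      exact h3.2
    exact hMmin _ hmem hlt
  have hnotsub : ¬ (M : Set X) ⊆ ⋃ j ∈ P.carrier, D.σ j := by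
    intro hsub
    have hall : ∀ c : Fin n → C, altTensor C n r c ∈ P.carrier := by
      intro c
      have hsσ : D.σ (altTensor C n r c) ⊆ (M : Set X) := by
        rw [hMeq, ← D.sigma_altTensor n r]
        exact Set.subset_iUnion (fun c => D.σ (altTensor C n r c)) c
      have : D.σ (altTensor C n r c) ⊆ ⋃ j ∈ P.carrier, D.σ j := hsσ.trans hsub
      rw [← hPY]
      exact this
    obtain ⟨i, hi⟩ := ThickIdeal.altTensor_prime hP n r hall
    exact hr i hi
  obtain ⟨x, hxM, hxY⟩ := Set.not_subset.mp hnotsub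
  exact ⟨x, fun t ht => hMsub t ht hxM, fun t ht hx => hxY (Set.mem_biUnion ht hx)⟩

end Datum

lemma isClosed_supp (t : C) : IsClosed (supp C t) := by
  rw [← isOpen_compl_iff]
  have : (supp C t)ᶜ = {P : Spc C | (P.1.carrier ∩ {t}).Nonempty} := by
    ext P
    simp [supp, Set.Nonempty]
  rw [this]
  exact TopologicalSpace.isOpen_generateFrom_of_mem ⟨{t}, rfl⟩

lemma carrier_subset_of_mem_closure {P Q : Spc C} (h : Q ∈ closure ({P} : Set (Spc C))) :
    Q.1.carrier ⊆ P.1.carrier := by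
  intro t htQ
  by_contra htP
  have hcl : closure ({P} : Set (Spc C)) ⊆ supp C t :=
    closure_minimal (Set.singleton_subset_iff.2 htP) (isClosed_supp t)
  exact hcl h htQ

end Aux

/-- If `Spc C` is noetherian and `(X, σ)` is a classifying support datum on `C`,
then the universal map `f_σ : X → Spc C`, `f_σ(x) = {t : x ∉ σ(t)}`,
is a homeomorphism. -/
theorem statement2 {X : Type*} [TopologicalSpace X]
    (noeth : NoetherianSpace (Spc C)) (D : ClassifyingSupportDatum C X)
    (f : X → Spc C) (hf : ∀ x : X, (f x).1.carrier = {t : C | x ∉ D.σ t}) :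
    ∃ h : X ≃ₜ Spc C, ⇑h = f := by
  haveI := D.noetherian
  haveI := D.t0
  haveI := D.sober
  -- injectivity
  have hinj : Function.Injective f := by
    intro x y hxy
    have hc : ∀ t : C, x ∈ D.σ t ↔ y ∈ D.σ t := by
      intro t
      have hcar : {t : C | x ∉ D.σ t} = {t : C | y ∉ D.σ t} := by
        rw [← hf x, ← hf y, hxy]
      have := Set.ext_iff.mp hcar t
      simp only [Set.mem_setOf_eq] at this
      exact not_iff_not.mp this
    obtain ⟨t, hxt, hts⟩ := D.exists_sigma_closure x
    obtain ⟨s, hys, hss⟩ := D.exists_sigma_closure y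
    have hyx : y ∈ closure ({x} : Set X) := hts ((hc t).mp hxt)
    have hxy' : x ∈ closure ({y} : Set X) := hss ((hc s).mpr hys)
    apply Inseparable.eq
    rw [inseparable_iff_closure_eq]
    exact subset_antisymm
      (closure_minimal (Set.singleton_subset_iff.2 hxy') isClosed_closure)
      (closure_minimal (Set.singleton_subset_iff.2 hyx) isClosed_closure)
  -- surjectivity
  have hsurj : Function.Surjective f := by
    intro P
    obtain ⟨x, h1, h2⟩ := D.exists_point P.1 P.2
    refine ⟨x, Subtype.ext (ThickIdeal.carrier_injective ?_)⟩
    rw [hf x]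
    ext t
    simp only [Set.mem_setOf_eq]
    constructor
    · intro hx
      by_contra ht
      exact hx (h1 t ht)
    · intro ht
      exact h2 t ht
  have hbij : Function.Bijective f := ⟨hinj, hsurj⟩
  -- continuity
  have hcont : Continuous f := by
    rw [continuous_generateFrom_iff]
    rintro U ⟨S, rfl⟩
    have hpre : f ⁻¹' {P : Spc C | (P.1.carrier ∩ S).Nonempty} = ⋃ t ∈ S, (D.σ t)ᶜ := by
      ext x
      simp only [Set.mem_preimage, Set.mem_setOf_eq, Set.mem_iUnion, Set.mem_compl_iff,
        Set.Nonempty, Set.mem_inter_iff, hf x]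
      constructor
      · rintro ⟨t, ht1, ht2⟩
        exact ⟨t, ht2, ht1⟩
      · rintro ⟨t, ht1, ht2⟩
        exact ⟨t, ht2, ht1⟩
    rw [hpre]
    exact isOpen_biUnion fun t _ => (D.isClosed_σ t).isOpen_compl
  -- images of closures of points
  have himg : ∀ x : X, f '' closure {x} = closure {f x} := by
    intro x
    apply subset_antisymm
    · have h1 := image_closure_subset_closure_image (f := f) (s := {x}) hcont
      rwa [Set.image_singleton] at h1
    · intro Q hQ
      obtain ⟨y, rfl⟩ := hsurj Q
      have hsub : (f y).1.carrier ⊆ (f x).1.carrier := carrier_subset_of_mem_closure hQ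
      have hmono : ∀ t : C, x ∈ D.σ t → y ∈ D.σ t := by
        intro t hx
        by_contra hy
        have h1 : t ∈ (f y).1.carrier := by rw [hf]; exact hy
        have h2 := hsub h1
        rw [hf] at h2
        exact h2 hx
      obtain ⟨t, hxt, hts⟩ := D.exists_sigma_closure x
      exact ⟨y, hts (hmono t hxt), rfl⟩
  -- f is a closed map
  have hclosed : IsClosedMap f := by
    intro F hF
    obtain ⟨S, hSfin, hScl, hSirr, rfl⟩ :=
      TopologicalSpace.NoetherianSpace.exists_finite_set_isClosed_irreducible hF
    rw [Set.image_sUnion]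
    rw [Set.sUnion_image]
    refine Set.Finite.isClosed_biUnion hSfin ?_
    intro s hs
    have hg : IsGenericPoint (hSirr s hs).genericPoint s :=
      (hSirr s hs).isGenericPoint_genericPoint (hScl s hs)
    rw [← hg, himg]
    exact isClosed_closure
  -- f is an open map
  have hopen : IsOpenMap f := by
    intro U hU
    have : f '' U = (f '' Uᶜ)ᶜ := by
      rw [Set.image_compl_eq hbij, compl_compl]
    rw [this]
    exact (hclosed _ hU.isClosed_compl).isOpen_compl
  exact ⟨Equiv.toHomeomorphOfContinuousOpen (Equiv.ofBijective f hbij) hcont hopen, rfl⟩
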